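/- arXiv:2209.08775 — 3 statements merged into one kernel-verified Lean document; each statement's English description precedes it below -/
import Mathlib

section
/- Let R₁ and R₂ be bounded normal operators on a Hilbert space H. Then the Hausdorff distance between their spectra satisfies d_H(σ(R₁), σ(R₂)) ≤ ‖R₁ − R₂‖, where ‖·‖ is the operator norm. -/
open Metric

lemma aux_isStarNormal_sub {A : Type*} [CStarAlgebra A] (b : A) (hb : IsStarNormal b)
    (lam : ℂ) : IsStarNormal (algebraMap ℂ A lam - b) := by
  constructor
  have hcomm : Commute (star b) b := hb.star_comm_self
  simp only [star_sub, ← algebraMap_star_comm]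
  exact (Algebra.commute_algebraMap_left _ _).sub_left
    ((Algebra.commute_algebraMap_right _ _).sub_right hcomm)

lemma aux_isStarNormal_inv {A : Type*} [CStarAlgebra A] (u : Aˣ)
    (hu : IsStarNormal (u : A)) : IsStarNormal ((↑u⁻¹ : A)) := by
  constructor
  have h : Commute ((star u : Aˣ) : A) (u : A) := by
    simpa [Units.coe_star] using hu.star_comm_self
  have := (h.units_inv_left).units_inv_right
  simpa [Units.coe_star_inv] using this

lemma aux_onesided {A : Type*} [CStarAlgebra A] (a b : A)
    (ha : IsStarNormal a) (hb : IsStarNormal b) {lam : ℂ} (hlam : lam ∈ spectrum ℂ a) :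
    ∃ mu ∈ spectrum ℂ b, dist lam mu ≤ ‖a - b‖ := by
  have hnt : Nontrivial A := by
    by_contra h
    have : Subsingleton A := not_nontrivial_iff_subsingleton.mp h
    exact (spectrum.mem_iff.mp hlam) (isUnit_of_subsingleton _)
  have hbne : (spectrum ℂ b).Nonempty := spectrum.nonempty b
  have hbc : IsCompact (spectrum ℂ b) := spectrum.isCompact b
  suffices hd : infDist lam (spectrum ℂ b) ≤ ‖a - b‖ by
    obtain ⟨mu, hmu, hmd⟩ := hbc.exists_infDist_eq_dist hbne lam
    exact ⟨mu, hmu, hmd ▸ hd⟩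
  by_contra hcon
  push_neg at hcon
  set d := infDist lam (spectrum ℂ b) with hdd
  have hdpos : 0 < d := lt_of_le_of_lt (norm_nonneg _) hcon
  have hnot : lam ∉ spectrum ℂ b := fun hmem => by
    have : d = 0 := by simpa [hdd] using infDist_zero_of_mem hmem
    simp [this] at hdpos
  have hunit : IsUnit (algebraMap ℂ A lam - b) := not_not.mp hnot
  obtain ⟨u, hu⟩ := hunit
  have hun : IsStarNormal (u : A) := hu ▸ aux_isStarNormal_sub b hb lam
  have huin : IsStarNormal ((↑u⁻¹ : A)) := aux_isStarNormal_inv u hun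
  -- bound on spectrum of u⁻¹
  have hradius : ∀ k ∈ spectrum ℂ ((↑u⁻¹ : A)), ‖k‖ ≤ d⁻¹ := by
    intro k hk
    have hki : k⁻¹ ∈ spectrum ℂ (u : A) :=
      spectrum.inv₀_mem_inv_iff.mp (by rwa [inv_inv])
    rw [hu, ← spectrum.singleton_sub_eq] at hki
    obtain ⟨x, hx, mu, hmu, hxmu⟩ := hki
    simp only [Set.mem_singleton_iff] at hx
    have hdist : d ≤ ‖lam - mu‖ := by rw [← dist_eq_norm]; exact infDist_le_dist_of_mem hmu
    have hne : ‖k⁻¹‖ = ‖lam - mu‖ := by rw [← hxmu, hx]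
    rw [norm_inv] at hne
    have hklam : d ≤ ‖k‖⁻¹ := hne ▸ hdist
    rw [← inv_inv ‖k‖]
    exact inv_anti₀ hdpos hklam
  have hnorm : ‖(↑u⁻¹ : A)‖ ≤ d⁻¹ := by
    have h1 : spectralRadius ℂ ((↑u⁻¹ : A)) ≤ ENNReal.ofReal d⁻¹ := by
      refine iSup₂_le fun k hk => ?_
      rw [show ((‖k‖₊ : NNReal) : ENNReal) = ENNReal.ofReal ‖k‖ by rw [ofReal_norm]; rfl]
      exact ENNReal.ofReal_le_ofReal (hradius k hk)
    rw [IsStarNormal.spectralRadius_eq_nnnorm] at h1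
    have h2 := ENNReal.toReal_mono ENNReal.ofReal_ne_top h1
    simpa [ENNReal.toReal_ofReal (le_of_lt (inv_pos.mpr hdpos))] using h2
  have hsmall : ‖(↑u⁻¹ : A) * (a - b)‖ < 1 := by
    calc ‖(↑u⁻¹ : A) * (a - b)‖ ≤ ‖(↑u⁻¹ : A)‖ * ‖a - b‖ := norm_mul_le _ _
    _ ≤ d⁻¹ * ‖a - b‖ := by gcongr
    _ < d⁻¹ * d := by gcongr
    _ = 1 := inv_mul_cancel₀ hdpos.ne'
  have hunit2 : IsUnit (1 - (↑u⁻¹ : A) * (a - b)) := (Units.oneSub _ hsmall).isUnit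
  have hfin : IsUnit (algebraMap ℂ A lam - a) := by
    have heq : (algebraMap ℂ A lam - a) = (u : A) * (1 - (↑u⁻¹ : A) * (a - b)) := by
      rw [mul_sub, mul_one, ← mul_assoc, u.mul_inv, one_mul, hu]
      abel
    rw [heq]
    exact u.isUnit.mul hunit2
  exact (spectrum.mem_iff.mp hlam) hfin

/-- For bounded normal operators `R₁, R₂` on a complex Hilbert space `H`,
the Hausdorff distance between their spectra is bounded by the operator norm of their
difference: `d_H(σ(R₁), σ(R₂)) ≤ ‖R₁ − R₂‖`. -/
theorem hausdorffDist_spectrum_le_norm_sub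
    {H : Type*} [NormedAddCommGroup H] [InnerProductSpace ℂ H] [CompleteSpace H]
    (R₁ R₂ : H →L[ℂ] H) (h₁ : IsStarNormal R₁) (h₂ : IsStarNormal R₂) :
    Metric.hausdorffDist (spectrum ℂ R₁) (spectrum ℂ R₂) ≤ ‖R₁ - R₂‖ := by
  refine Metric.hausdorffDist_le_of_mem_dist (norm_nonneg _) ?_ ?_
  · exact fun lam hlam => aux_onesided R₁ R₂ h₁ h₂ hlam
  · intro lam hlam
    obtain ⟨mu, hmu, hd⟩ := aux_onesided R₂ R₁ h₂ h₁ hlam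
    exact ⟨mu, hmu, by rwa [norm_sub_rev]⟩
end

section
/- Let H be a Hilbert space, a_ε and a densely defined closed nonnegative symmetric sesquilinear forms with associated self-adjoint operators A_ε and A, and let H¹_ε = dom(a_ε), H¹ = dom(a) with graph norms ‖u‖²_{H¹_ε} = a_ε[u,u] + ‖u‖², ‖f‖²_{H¹} = a[f,f] + ‖f‖², and H² = dom(A) with norm ‖f‖_{H²} = ‖(A+I)f‖. Suppose J_ε : H¹ → H¹_ε and J'_ε : H¹_ε → H¹ are linear operators satisfying: (i) ‖J_ε f − f‖_H ≤ δ_ε ‖f‖_{H¹} for all f ∈ H¹; (ii) ‖J'_ε u − u‖_H ≤ δ_ε ‖u‖_{H¹_ε} for all u ∈ H¹_ε; (iii) |a_ε[J_ε f, u] − a[f, J'_ε u]| ≤ δ_ε ‖f‖_{H²} ‖u‖_{H¹_ε} for all f ∈ H², u ∈ H¹_ε. Then there is an absolute constant C > 0 such that ‖(A_ε + I)⁻¹ f − J_ε (A + I)⁻¹ f‖_{H¹_ε} ≤ C δ_ε ‖f‖_H for all f ∈ H. -/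
open scoped InnerProductSpace

/-- **abstract scheme, Proposition 2.5 of [AP21].**
`H` is a Hilbert space, `aε`, `a` nonnegative hermitian sesquilinear forms with form
domains `Dε = dom(aε)`, `D = dom(a)`, and `Rε = (Aε + I)⁻¹`, `R = (A + I)⁻¹` the
resolvents of the associated self-adjoint operators, characterized by the weak
formulations `aε[Rε f, v] + (Rε f, v) = (f, v)` for `v ∈ Dε` (and similarly for `R`).
Note `H² = dom(A) = ran(R)` with `‖R g‖_{H²} = ‖g‖`. If `Jε : H¹ → H¹_ε` and
`J'ε : H¹_ε → H¹` are linear operators satisfying (i) `‖Jε f − f‖ ≤ δ‖f‖_{H¹}`,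
(ii) `‖J'ε u − u‖ ≤ δ‖u‖_{H¹_ε}`, (iii) `|aε[Jε f, u] − a[f, J'ε u]| ≤ δ‖f‖_{H²}‖u‖_{H¹_ε}`
for `f ∈ H²`, `u ∈ H¹_ε`, then `‖(Aε+I)⁻¹ f − Jε (A+I)⁻¹ f‖_{H¹_ε} ≤ C δ ‖f‖` for all
`f ∈ H`, with an absolute constant `C > 0`. -/
theorem abstract_resolvent_comparison :
    ∃ C : ℝ, 0 < C ∧
      ∀ (H : Type) (_ : NormedAddCommGroup H), ∀ (_ : InnerProductSpace ℂ H)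
        (_ : CompleteSpace H)
        (Dε D : Submodule ℂ H)
        (aε a : H →ₗ⋆[ℂ] H →ₗ[ℂ] ℂ)
        (Rε R Jε J' : H →ₗ[ℂ] H) (δ : ℝ),
        0 ≤ δ →
        (∀ u ∈ Dε, (aε u u).im = 0 ∧ 0 ≤ (aε u u).re) →
        (∀ f ∈ D, (a f f).im = 0 ∧ 0 ≤ (a f f).re) →
        (∀ f : H, Rε f ∈ Dε ∧ ∀ v ∈ Dε, aε (Rε f) v + ⟪Rε f, v⟫_ℂ = ⟪f, v⟫_ℂ) →
        (∀ f : H, R f ∈ D ∧ ∀ v ∈ D, a (R f) v + ⟪R f, v⟫_ℂ = ⟪f, v⟫_ℂ) →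
        (∀ f ∈ D, Jε f ∈ Dε) →
        (∀ u ∈ Dε, J' u ∈ D) →
        (∀ f ∈ D, ‖Jε f - f‖ ≤ δ * Real.sqrt ((a f f).re + ‖f‖ ^ 2)) →
        (∀ u ∈ Dε, ‖J' u - u‖ ≤ δ * Real.sqrt ((aε u u).re + ‖u‖ ^ 2)) →
        (∀ g : H, ∀ u ∈ Dε,
          ‖aε (Jε (R g)) u - a (R g) (J' u)‖ ≤
            δ * ‖g‖ * Real.sqrt ((aε u u).re + ‖u‖ ^ 2)) →
        ∀ f : H,
          Real.sqrt ((aε (Rε f - Jε (R f)) (Rε f - Jε (R f))).re +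
              ‖Rε f - Jε (R f)‖ ^ 2) ≤ C * δ * ‖f‖ := by
  refine ⟨4, by norm_num, ?_⟩
  intro H _ _ _ Dε D aε a Rε R Jε J' δ hδ haε ha hRε hR hJε hJ' hi hii hiii f
  set u : H := Rε f - Jε (R f) with hu_def
  have hRfD : R f ∈ D := (hR f).1
  have huDε : u ∈ Dε := Dε.sub_mem (hRε f).1 (hJε _ hRfD)
  have hJ'uD : J' u ∈ D := hJ' u huDε
  set N : ℝ := Real.sqrt ((aε u u).re + ‖u‖ ^ 2) with hN_def
  have hN0 : 0 ≤ N := Real.sqrt_nonneg _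
  have haεu : 0 ≤ (aε u u).re := (haε u huDε).2
  have hNsq : N ^ 2 = (aε u u).re + ‖u‖ ^ 2 := by
    rw [hN_def, Real.sq_sqrt (by positivity)]
  have huN : ‖u‖ ≤ N := by
    rw [hN_def]
    have : ‖u‖ = Real.sqrt (‖u‖ ^ 2) := by
      rw [Real.sqrt_sq (norm_nonneg u)]
    rw [this]
    exact Real.sqrt_le_sqrt (by nlinarith [Real.sq_sqrt (sq_nonneg ‖u‖)])
  -- basic bound on R f
  have hRf : (a (R f) (R f)).re + ‖R f‖ ^ 2 ≤ ‖f‖ ^ 2 := by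
    have h1 := (hR f).2 (R f) hRfD
    have h2 : ((a (R f) (R f)) + ⟪R f, R f⟫_ℂ).re = (⟪f, R f⟫_ℂ).re := by rw [h1]
    rw [Complex.add_re] at h2
    have h3 : (⟪(R f : H), R f⟫_ℂ).re = ‖R f‖ ^ 2 := by
      simpa using inner_self_eq_norm_sq (𝕜 := ℂ) (R f)
    have h4 : (⟪(f : H), R f⟫_ℂ).re ≤ ‖f‖ * ‖R f‖ := by
      simpa using re_inner_le_norm (𝕜 := ℂ) f (R f)
    have h5 : 0 ≤ (a (R f) (R f)).re := (ha _ hRfD).2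
    nlinarith [sq_nonneg (‖f‖ - ‖R f‖)]
  -- key algebraic identity
  have key : aε u u + ⟪u, u⟫_ℂ =
      ⟪f, u - J' u⟫_ℂ + ⟪R f, J' u - u⟫_ℂ + ⟪R f - Jε (R f), u⟫_ℂ
        - (aε (Jε (R f)) u - a (R f) (J' u)) := by
    have h1 : aε (Rε f) u + ⟪Rε f, u⟫_ℂ = ⟪f, u⟫_ℂ := (hRε f).2 u huDε
    have h2 : a (R f) (J' u) + ⟪R f, J' u⟫_ℂ = ⟪f, J' u⟫_ℂ := (hR f).2 _ hJ'uD
    simp only [hu_def, map_sub, LinearMap.sub_apply, inner_sub_left, inner_sub_right]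
    simp only [hu_def, map_sub, LinearMap.sub_apply, inner_sub_left, inner_sub_right] at h1 h2
    ring_nf
    ring_nf at h1 h2
    linear_combination h1 - h2
  -- bound each term
  have b1 : ‖⟪(f : H), u - J' u⟫_ℂ‖ ≤ δ * ‖f‖ * N := by
    calc ‖⟪(f : H), u - J' u⟫_ℂ‖ ≤ ‖f‖ * ‖u - J' u‖ := by
          exact norm_inner_le_norm (𝕜 := ℂ) f (u - J' u)
      _ ≤ ‖f‖ * (δ * N) := by
          refine mul_le_mul_of_nonneg_left ?_ (norm_nonneg f)
          rw [← norm_neg]; simpa [neg_sub] using hii u huDε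
      _ = δ * ‖f‖ * N := by ring
  have hRfnorm : ‖R f‖ ≤ ‖f‖ := by
    nlinarith [hRf, (ha _ hRfD).2, norm_nonneg (R f), norm_nonneg f]
  have b2 : ‖⟪(R f : H), J' u - u⟫_ℂ‖ ≤ δ * ‖f‖ * N := by
    calc ‖⟪(R f : H), J' u - u⟫_ℂ‖ ≤ ‖R f‖ * ‖J' u - u‖ := by
          exact norm_inner_le_norm (𝕜 := ℂ) (R f) (J' u - u)
      _ ≤ ‖f‖ * (δ * N) :=
          mul_le_mul hRfnorm (hii u huDε) (norm_nonneg _) (norm_nonneg f)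
      _ = δ * ‖f‖ * N := by ring
  have b3 : ‖⟪(R f - Jε (R f) : H), u⟫_ℂ‖ ≤ δ * ‖f‖ * N := by
    have hJR : ‖Jε (R f) - R f‖ ≤ δ * ‖f‖ := by
      calc ‖Jε (R f) - R f‖ ≤ δ * Real.sqrt ((a (R f) (R f)).re + ‖R f‖ ^ 2) :=
            hi _ hRfD
        _ ≤ δ * ‖f‖ := by
            refine mul_le_mul_of_nonneg_left ?_ hδ
            calc Real.sqrt ((a (R f) (R f)).re + ‖R f‖ ^ 2)
                ≤ Real.sqrt (‖f‖ ^ 2) := Real.sqrt_le_sqrt hRf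
              _ = ‖f‖ := Real.sqrt_sq (norm_nonneg f)
    calc ‖⟪(R f - Jε (R f) : H), u⟫_ℂ‖ ≤ ‖R f - Jε (R f)‖ * ‖u‖ := by
          exact norm_inner_le_norm (𝕜 := ℂ) (R f - Jε (R f)) u
      _ ≤ (δ * ‖f‖) * N := by
          refine mul_le_mul ?_ huN (norm_nonneg _) (by positivity)
          rw [← norm_neg]; simpa [neg_sub] using hJR
      _ = δ * ‖f‖ * N := by ring
  have b4 : ‖aε (Jε (R f)) u - a (R f) (J' u)‖ ≤ δ * ‖f‖ * N :=
    hiii f u huDε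
  -- combine
  have hre : N ^ 2 = (aε u u + ⟪u, u⟫_ℂ).re := by
    rw [Complex.add_re, hNsq]
    congr 1
    simpa using (inner_self_eq_norm_sq (𝕜 := ℂ) u).symm
  have habs : (aε u u + ⟪u, u⟫_ℂ).re ≤ 4 * (δ * ‖f‖ * N) := by
    calc (aε u u + ⟪u, u⟫_ℂ).re ≤ ‖aε u u + ⟪u, u⟫_ℂ‖ :=
          Complex.re_le_norm _
      _ ≤ 4 * (δ * ‖f‖ * N) := by
          rw [key]
          calc ‖⟪(f : H), u - J' u⟫_ℂ + ⟪R f, J' u - u⟫_ℂ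
                + ⟪R f - Jε (R f), u⟫_ℂ - (aε (Jε (R f)) u - a (R f) (J' u))‖
              ≤ ‖⟪(f : H), u - J' u⟫_ℂ‖ + ‖⟪(R f : H), J' u - u⟫_ℂ‖
                + ‖⟪(R f - Jε (R f) : H), u⟫_ℂ‖
                + ‖aε (Jε (R f)) u - a (R f) (J' u)‖ := by
                  apply (norm_sub_le _ _).trans
                  gcongr
                  apply (norm_add_le _ _).trans
                  gcongr
                  exact norm_add_le _ _
            _ ≤ 4 * (δ * ‖f‖ * N) := by linarith [b1, b2, b3, b4]
  have : N ^ 2 ≤ 4 * (δ * ‖f‖ * N) := hre ▸ habs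
  have hδf : 0 ≤ δ * ‖f‖ := by positivity
  nlinarith [this, hN0, hδf]
end

section
/- Let D ⊂ ℝ^n be a bounded convex domain and let D₁, D₂ ⊆ D be measurable subsets of positive Lebesgue measure. Then there exists a constant C depending only on n such that for every v ∈ H¹(D): |⟨v⟩_{D₁} − ⟨v⟩_{D₂}|² ≤ C (diam(D))^{n+2} / (vol(D₁) · vol(D₂)) · ‖∇v‖²_{L²(D)}, where ⟨v⟩_{D_i} denotes the mean value of v over D_i. -/
open MeasureTheory
open scoped ENNReal

theorem var_le {α : Type*} [MeasurableSpace α] {μ : Measure α} [IsFiniteMeasure μ]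
    {h : α → ℝ} (hh : MemLp h 2 μ) :
    (∫ a, h a ∂μ) ^ 2 ≤ (μ Set.univ).toReal * ∫ a, h a ^ 2 ∂μ := by
  have h1 : Integrable h μ := hh.integrable one_le_two
  have h2 : Integrable (fun a => h a ^ 2) μ := hh.integrable_sq
  set M := (μ Set.univ).toReal with hM
  set m := ∫ a, h a ∂μ with hm
  have hM0 : 0 ≤ M := ENNReal.toReal_nonneg
  rcases eq_or_lt_of_le hM0 with hMz | hMpos
  · have hμ : μ Set.univ = 0 := by
      have := measure_ne_top μ Set.univ
      exact (ENNReal.toReal_eq_zero_iff _).mp hMz.symm |>.resolve_right this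
    have : μ = 0 := Measure.measure_univ_eq_zero.mp hμ
    subst this
    simp [hm]
  · have key : 0 ≤ ∫ a, (M * h a - m) ^ 2 ∂μ := integral_nonneg fun a => sq_nonneg _
    have expand : ∫ a, (M * h a - m) ^ 2 ∂μ
        = M ^ 2 * ∫ a, h a ^ 2 ∂μ - 2 * M * m * m + m ^ 2 * M := by
      have e : (fun a => (M * h a - m) ^ 2)
          = fun a => M ^ 2 * h a ^ 2 - 2 * M * m * h a + m ^ 2 := by
        funext a; ring
      have i1 : Integrable (fun a => M ^ 2 * h a ^ 2 - 2 * M * m * h a) μ :=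
        (h2.const_mul _).sub (h1.const_mul _)
      rw [e, integral_add i1 (integrable_const _),
        integral_sub (h2.const_mul _) (h1.const_mul _), integral_const_mul, integral_const_mul,
        integral_const]
      simp only [smul_eq_mul, measureReal_def, ← hM, ← hm]
      ring
    nlinarith [key, expand, sq_nonneg m]
theorem seg_bound (n : ℕ) (v : EuclideanSpace ℝ (Fin n) → ℝ)
    (hv : Differentiable ℝ v) (x y : EuclideanSpace ℝ (Fin n)) {d : ℝ} (hd : 0 < d)
    (hxy : ‖x - y‖ ≤ d) :
    ENNReal.ofReal ((v x - v y) ^ 2) ≤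
      ENNReal.ofReal (d ^ 2) *
        ∫⁻ t in Set.Ioc (0:ℝ) 1, ENNReal.ofReal (‖fderiv ℝ v (y + t • (x - y))‖ ^ 2) := by
  set γ : ℝ → EuclideanSpace ℝ (Fin n) := fun t => y + t • (x - y) with hγ
  set S := ∫⁻ t in Set.Ioc (0:ℝ) 1, ENNReal.ofReal (‖fderiv ℝ v (γ t)‖ ^ 2) with hS
  by_cases hStop : S = ∞
  · rw [hStop, ENNReal.mul_top (by simp [ENNReal.ofReal_eq_zero]; positivity)]
    exact le_top
  have hγc : Continuous γ := continuous_const.add (continuous_id.smul continuous_const)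
  have hγm : Measurable γ := hγc.measurable
  set w : ℝ → ℝ := fun t => ‖fderiv ℝ v (γ t)‖ with hw
  have hwm : Measurable w := (measurable_fderiv ℝ v).norm.comp hγm
  set f' : ℝ → ℝ := fun t => fderiv ℝ v (γ t) (x - y) with hf'
  have hf'm : Measurable f' := (measurable_fderiv_apply_const ℝ v (x - y)).comp hγm
  have hbound : ∀ t, |f' t| ≤ d * w t := by
    intro t
    calc |f' t| = ‖fderiv ℝ v (γ t) (x - y)‖ := rfl
      _ ≤ ‖fderiv ℝ v (γ t)‖ * ‖x - y‖ := (fderiv ℝ v (γ t)).le_opNorm _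
      _ ≤ w t * d := by
          exact mul_le_mul_of_nonneg_left hxy (norm_nonneg _)
      _ = d * w t := mul_comm _ _
  have hw2int : IntegrableOn (fun t => w t ^ 2) (Set.Ioc (0:ℝ) 1) := by
    refine ⟨(hwm.pow_const 2).aestronglyMeasurable, ?_⟩
    simp only [HasFiniteIntegral]
    have : ∀ t : ℝ, ‖w t ^ 2‖ₑ = ENNReal.ofReal (‖fderiv ℝ v (γ t)‖ ^ 2) := by
      intro t
      rw [← Real.enorm_eq_ofReal (by positivity)]
    simp only [this]
    exact lt_of_le_of_ne le_top hStop
  have hf'2int : IntegrableOn (fun t => f' t ^ 2) (Set.Ioc (0:ℝ) 1) := by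
    refine Integrable.mono (hw2int.const_mul (d ^ 2)) (hf'm.pow_const 2).aestronglyMeasurable ?_
    refine Filter.Eventually.of_forall fun t => ?_
    have h1 := hbound t
    have h2 : 0 ≤ w t := norm_nonneg _
    rw [Real.norm_eq_abs, Real.norm_eq_abs, abs_of_nonneg (sq_nonneg _),
      abs_of_nonneg (by positivity : (0:ℝ) ≤ d ^ 2 * w t ^ 2)]
    nlinarith [abs_nonneg (f' t), sq_abs (f' t)]
  have hMem : MemLp f' 2 (volume.restrict (Set.Ioc (0:ℝ) 1)) :=
    (memLp_two_iff_integrable_sq hf'm.aestronglyMeasurable).mpr hf'2int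
  have hf'int : IntegrableOn f' (Set.Ioc (0:ℝ) 1) := hMem.integrable one_le_two
  have hf'ii : IntervalIntegrable f' volume 0 1 :=
    (intervalIntegrable_iff_integrableOn_Ioc_of_le zero_le_one).mpr hf'int
  have hderiv : ∀ t ∈ Set.uIcc (0:ℝ) 1, HasDerivAt (fun s => v (γ s)) (f' t) t := by
    intro t _
    have h1 : HasDerivAt γ (x - y) t := by
      have := ((hasDerivAt_id t).smul_const (x - y)).const_add y
      simpa [hγ] using this
    exact (hv (γ t)).hasFDerivAt.comp_hasDerivAt t h1
  have hftc : ∫ t in (0:ℝ)..1, f' t = v x - v y := by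
    rw [intervalIntegral.integral_eq_sub_of_hasDerivAt hderiv hf'ii]
    simp [hγ]
  have hcs : (v x - v y) ^ 2 ≤ ∫ t in Set.Ioc (0:ℝ) 1, f' t ^ 2 := by
    have h1 := var_le (μ := volume.restrict (Set.Ioc (0:ℝ) 1)) hMem
    have h2 : ((volume.restrict (Set.Ioc (0:ℝ) 1)) Set.univ).toReal = 1 := by
      simp [Measure.restrict_apply_univ, Real.volume_Ioc]
    rw [h2, one_mul] at h1
    have h3 : ∫ a, f' a ∂(volume.restrict (Set.Ioc (0:ℝ) 1)) = v x - v y := by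
      rw [← hftc, intervalIntegral.integral_of_le zero_le_one]
    rw [h3] at h1
    exact h1
  have hmono : ∫ t in Set.Ioc (0:ℝ) 1, f' t ^ 2 ≤ ∫ t in Set.Ioc (0:ℝ) 1, d ^ 2 * w t ^ 2 := by
    refine integral_mono hf'2int (hw2int.const_mul _) fun t => ?_
    have h1 := hbound t
    have h2 : 0 ≤ w t := norm_nonneg _
    nlinarith [abs_nonneg (f' t), sq_abs (f' t)]
  have hwint : ∫ t in Set.Ioc (0:ℝ) 1, d ^ 2 * w t ^ 2 = d ^ 2 * S.toReal := by
    rw [integral_const_mul]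
    congr 1
    rw [integral_eq_lintegral_of_nonneg_ae (Filter.Eventually.of_forall fun t => sq_nonneg _)
      (hwm.pow_const 2).aestronglyMeasurable]
  have final : (v x - v y) ^ 2 ≤ d ^ 2 * S.toReal := by
    calc (v x - v y) ^ 2 ≤ ∫ t in Set.Ioc (0:ℝ) 1, f' t ^ 2 := hcs
      _ ≤ ∫ t in Set.Ioc (0:ℝ) 1, d ^ 2 * w t ^ 2 := hmono
      _ = d ^ 2 * S.toReal := hwint
  calc ENNReal.ofReal ((v x - v y) ^ 2) ≤ ENNReal.ofReal (d ^ 2 * S.toReal) :=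
        ENNReal.ofReal_le_ofReal final
    _ = ENNReal.ofReal (d ^ 2) * ENNReal.ofReal S.toReal :=
        ENNReal.ofReal_mul (sq_nonneg d)
    _ = ENNReal.ofReal (d ^ 2) * S := by rw [ENNReal.ofReal_toReal hStop]
theorem cov_glob (n : ℕ) (f : EuclideanSpace ℝ (Fin n) → ℝ≥0∞) (hf : Measurable f)
    {c : ℝ} (hc : c ≠ 0) (b : EuclideanSpace ℝ (Fin n)) :
    ∫⁻ y, f (c • y + b) = ENNReal.ofReal |(c ^ n)⁻¹| * ∫⁻ z, f z := by
  have hmap : Measurable fun y : EuclideanSpace ℝ (Fin n) => c • y :=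
    (continuous_const_smul c).measurable
  have hfb : Measurable fun z : EuclideanSpace ℝ (Fin n) => f (z + b) :=
    hf.comp (measurable_add_const b)
  have h1 : ∫⁻ z, f (z + b) ∂(Measure.map (c • ·) volume) = ∫⁻ y, f (c • y + b) :=
    lintegral_map hfb hmap
  rw [← lintegral_add_right_eq_self (f := f) b, ← h1,
    Measure.map_addHaar_smul volume hc, lintegral_smul_measure,
    finrank_euclideanSpace_fin, smul_eq_mul]

theorem cov_set (n : ℕ) (f : EuclideanSpace ℝ (Fin n) → ℝ≥0∞) (hf : Measurable f)
    {c : ℝ} (hc : 0 < c) (b : EuclideanSpace ℝ (Fin n))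
    {A D : Set (EuclideanSpace ℝ (Fin n))} (hA : MeasurableSet A) (hD : MeasurableSet D)
    (hsub : ∀ y ∈ A, c • y + b ∈ D) :
    ∫⁻ y in A, f (c • y + b) ≤ ENNReal.ofReal (c ^ n)⁻¹ * ∫⁻ z in D, f z := by
  have e1 : ∫⁻ y in A, f (c • y + b) = ∫⁻ y in A, (D.indicator f) (c • y + b) := by
    refine setLIntegral_congr_fun hA (fun y hy => ?_)
    rw [Set.indicator_of_mem (hsub y hy)]
  rw [e1]
  calc ∫⁻ y in A, (D.indicator f) (c • y + b)
      ≤ ∫⁻ y, (D.indicator f) (c • y + b) := setLIntegral_le_lintegral _ _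
    _ = ENNReal.ofReal |(c ^ n)⁻¹| * ∫⁻ z, (D.indicator f) z :=
        cov_glob n _ (hf.indicator hD) hc.ne' b
    _ = ENNReal.ofReal (c ^ n)⁻¹ * ∫⁻ z in D, f z := by
        rw [lintegral_indicator hD, abs_of_nonneg (by positivity)]

theorem pow_inv_le (n : ℕ) {c : ℝ} (hc : (2:ℝ)⁻¹ ≤ c) :
    ENNReal.ofReal (c ^ n)⁻¹ ≤ 2 ^ n := by
  have hc0 : (0:ℝ) < c := lt_of_lt_of_le (by norm_num) hc
  have h1 : (c ^ n)⁻¹ ≤ 2 ^ n := by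
    rw [inv_le_comm₀ (by positivity) (by positivity)]
    calc ((2:ℝ) ^ n)⁻¹ = (2⁻¹) ^ n := by rw [inv_pow]
      _ ≤ c ^ n := pow_le_pow_left₀ (by norm_num) hc n
  calc ENNReal.ofReal (c ^ n)⁻¹ ≤ ENNReal.ofReal (2 ^ n) := ENNReal.ofReal_le_ofReal h1
    _ = 2 ^ n := by
        rw [ENNReal.ofReal_pow (by norm_num)]
        norm_num

theorem triple_bound (n : ℕ) (g : EuclideanSpace ℝ (Fin n) → ℝ≥0∞) (hg : Measurable g)
    {D D₁ D₂ : Set (EuclideanSpace ℝ (Fin n))} (hconv : Convex ℝ D)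
    (hD : MeasurableSet D) (h1 : MeasurableSet D₁) (h2 : MeasurableSet D₂)
    (h1D : D₁ ⊆ D) (h2D : D₂ ⊆ D) :
    ∫⁻ x in D₁, ∫⁻ y in D₂, ∫⁻ t in Set.Ioc (0:ℝ) 1, g ((1 - t) • y + t • x) ≤
      2 ^ n * volume D * ∫⁻ z in D, g z := by
  set J := ∫⁻ z in D, g z with hJ
  -- measurability of the big uncurried function
  have hGm : Measurable fun p : (EuclideanSpace ℝ (Fin n) × EuclideanSpace ℝ (Fin n)) × ℝ =>
      g ((1 - p.2) • p.1.2 + p.2 • p.1.1) := by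
    apply hg.comp
    apply Continuous.measurable
    fun_prop
  -- inner swap (y,t) for fixed x
  have swap1 : ∀ x : EuclideanSpace ℝ (Fin n),
      ∫⁻ y in D₂, ∫⁻ t in Set.Ioc (0:ℝ) 1, g ((1 - t) • y + t • x) =
      ∫⁻ t in Set.Ioc (0:ℝ) 1, ∫⁻ y in D₂, g ((1 - t) • y + t • x) := by
    intro x
    apply lintegral_lintegral_swap
    apply Measurable.aemeasurable
    apply hg.comp
    apply Continuous.measurable
    fun_prop
  have hHm : Measurable fun p : EuclideanSpace ℝ (Fin n) × ℝ =>
      ∫⁻ y in D₂, g ((1 - p.2) • y + p.2 • p.1) := by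
    apply Measurable.lintegral_prod_right (f := fun (p : EuclideanSpace ℝ (Fin n) × ℝ) y =>
      g ((1 - p.2) • y + p.2 • p.1))
    apply hg.comp
    apply Continuous.measurable
    fun_prop
  have swap2 :
      ∫⁻ x in D₁, ∫⁻ t in Set.Ioc (0:ℝ) 1, ∫⁻ y in D₂, g ((1 - t) • y + t • x) =
      ∫⁻ t in Set.Ioc (0:ℝ) 1, ∫⁻ x in D₁, ∫⁻ y in D₂, g ((1 - t) • y + t • x) := by
    apply lintegral_lintegral_swap
    exact hHm.aemeasurable
  calc ∫⁻ x in D₁, ∫⁻ y in D₂, ∫⁻ t in Set.Ioc (0:ℝ) 1, g ((1 - t) • y + t • x)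
      = ∫⁻ t in Set.Ioc (0:ℝ) 1, ∫⁻ x in D₁, ∫⁻ y in D₂, g ((1 - t) • y + t • x) := by
        rw [← swap2]; exact lintegral_congr fun x => swap1 x
    _ ≤ 2 ^ n * volume D * J := by
        rw [show Set.Ioc (0:ℝ) 1 = Set.Ioc (0:ℝ) 2⁻¹ ∪ Set.Ioc (2⁻¹:ℝ) 1 by
          rw [Set.Ioc_union_Ioc_eq_Ioc (by norm_num) (by norm_num)]]
        rw [lintegral_union measurableSet_Ioc (Set.Ioc_disjoint_Ioc_of_le le_rfl)]
        have partA : ∫⁻ t in Set.Ioc (0:ℝ) 2⁻¹, ∫⁻ x in D₁, ∫⁻ y in D₂,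
            g ((1 - t) • y + t • x) ≤ ENNReal.ofReal 2⁻¹ * (2 ^ n * J * volume D) := by
          calc ∫⁻ t in Set.Ioc (0:ℝ) 2⁻¹, ∫⁻ x in D₁, ∫⁻ y in D₂, g ((1 - t) • y + t • x)
              ≤ ∫⁻ _t in Set.Ioc (0:ℝ) 2⁻¹, (2 ^ n * J * volume D) := by
                refine setLIntegral_mono measurable_const fun t ht => ?_
                have hs : (2:ℝ)⁻¹ ≤ 1 - t := by
                  rcases ht with ⟨ht0, ht1⟩; linarith
                have hs0 : (0:ℝ) < 1 - t := lt_of_lt_of_le (by norm_num) hs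
                calc ∫⁻ x in D₁, ∫⁻ y in D₂, g ((1 - t) • y + t • x)
                    ≤ ∫⁻ _x in D₁, (2 ^ n * J) := by
                      refine setLIntegral_mono measurable_const fun x hx => ?_
                      calc ∫⁻ y in D₂, g ((1 - t) • y + t • x)
                          ≤ ENNReal.ofReal ((1 - t) ^ n)⁻¹ * J :=
                            cov_set n g hg hs0 (t • x) h2 hD (fun y hy =>
                              hconv (h2D hy) (h1D hx) (by linarith) (le_of_lt ht.1)
                                (by ring))
                        _ ≤ 2 ^ n * J :=
                            mul_le_mul_left (pow_inv_le n hs) J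
                    _ = 2 ^ n * J * volume D₁ := setLIntegral_const _ _
                    _ ≤ 2 ^ n * J * volume D := by
                      exact mul_le_mul_right (measure_mono h1D) _
            _ = 2 ^ n * J * volume D * volume (Set.Ioc (0:ℝ) 2⁻¹) := setLIntegral_const _ _
            _ = ENNReal.ofReal 2⁻¹ * (2 ^ n * J * volume D) := by
                rw [Real.volume_Ioc, show ((2:ℝ)⁻¹ - 0) = (2⁻¹:ℝ) by norm_num]
                ring
        have partB : ∫⁻ t in Set.Ioc (2⁻¹:ℝ) 1, ∫⁻ x in D₁, ∫⁻ y in D₂,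
            g ((1 - t) • y + t • x) ≤ ENNReal.ofReal 2⁻¹ * (2 ^ n * J * volume D) := by
          calc ∫⁻ t in Set.Ioc (2⁻¹:ℝ) 1, ∫⁻ x in D₁, ∫⁻ y in D₂, g ((1 - t) • y + t • x)
              ≤ ∫⁻ _t in Set.Ioc (2⁻¹:ℝ) 1, (2 ^ n * J * volume D) := by
                refine setLIntegral_mono measurable_const fun t ht => ?_
                have ht2 : (2:ℝ)⁻¹ ≤ t := le_of_lt ht.1
                have ht0 : (0:ℝ) < t := lt_of_lt_of_le (by norm_num) ht2
                have swapxy : ∫⁻ x in D₁, ∫⁻ y in D₂, g ((1 - t) • y + t • x) =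
                    ∫⁻ y in D₂, ∫⁻ x in D₁, g ((1 - t) • y + t • x) := by
                  apply lintegral_lintegral_swap
                  apply Measurable.aemeasurable
                  apply hg.comp
                  apply Continuous.measurable
                  fun_prop
                rw [swapxy]
                calc ∫⁻ y in D₂, ∫⁻ x in D₁, g ((1 - t) • y + t • x)
                    ≤ ∫⁻ _y in D₂, (2 ^ n * J) := by
                      refine setLIntegral_mono measurable_const fun y hy => ?_
                      have e : (fun x => g ((1 - t) • y + t • x)) =
                          fun x => g (t • x + (1 - t) • y) := by
                        funext x; rw [add_comm]
                      rw [e]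
                      calc ∫⁻ x in D₁, g (t • x + (1 - t) • y)
                          ≤ ENNReal.ofReal (t ^ n)⁻¹ * J :=
                            cov_set n g hg ht0 ((1 - t) • y) h1 hD (fun x hx =>
                              hconv (h1D hx) (h2D hy) (le_of_lt ht0)
                                (by rcases ht with ⟨_, ht1⟩; linarith) (by ring))
                        _ ≤ 2 ^ n * J := mul_le_mul_left (pow_inv_le n ht2) J
                    _ = 2 ^ n * J * volume D₂ := setLIntegral_const _ _
                    _ ≤ 2 ^ n * J * volume D := mul_le_mul_right (measure_mono h2D) _
            _ = 2 ^ n * J * volume D * volume (Set.Ioc (2⁻¹:ℝ) 1) := setLIntegral_const _ _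
            _ = ENNReal.ofReal 2⁻¹ * (2 ^ n * J * volume D) := by
                rw [Real.volume_Ioc, show ((1:ℝ) - 2⁻¹) = (2⁻¹:ℝ) by norm_num]
                ring
        calc _ ≤ ENNReal.ofReal 2⁻¹ * (2 ^ n * J * volume D) +
              ENNReal.ofReal 2⁻¹ * (2 ^ n * J * volume D) := add_le_add partA partB
          _ = (ENNReal.ofReal 2⁻¹ + ENNReal.ofReal 2⁻¹) * (2 ^ n * J * volume D) := by ring
          _ = 2 ^ n * volume D * J := by
              rw [← ENNReal.ofReal_add (by norm_num) (by norm_num)]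
              norm_num
              ring

set_option maxHeartbeats 1000000 in
/-- Let `D ⊂ ℝⁿ` be a bounded convex domain and `D₁, D₂ ⊆ D` measurable
subsets of positive Lebesgue measure. There is a constant `C = C(n)` such that for every
`v ∈ H¹(D)`:
`|⟨v⟩_{D₁} − ⟨v⟩_{D₂}|² ≤ C (diam D)^{n+2} / (vol(D₁)·vol(D₂)) · ‖∇v‖²_{L²(D)}`. -/
theorem mean_value_difference_convex
    (n : ℕ) :
    ∃ C : ℝ, 0 < C ∧
      ∀ (D D₁ D₂ : Set (EuclideanSpace ℝ (Fin n)))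
        (v : EuclideanSpace ℝ (Fin n) → ℝ),
        Convex ℝ D → IsOpen D → Bornology.IsBounded D → D.Nonempty →
        D₁ ⊆ D → D₂ ⊆ D →
        MeasurableSet D₁ → MeasurableSet D₂ →
        0 < volume D₁ → 0 < volume D₂ →
        Differentiable ℝ v →
        MemLp v 2 (volume.restrict D) →
        MemLp (fun x => fderiv ℝ v x) 2 (volume.restrict D) →
        ((⨍ x in D₁, v x) - ⨍ x in D₂, v x) ^ 2 ≤
          C * Metric.diam D ^ (n + 2) / ((volume D₁).toReal * (volume D₂).toReal) *
            ∫ x in D, ‖fderiv ℝ v x‖ ^ 2 := by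
  have hBpos : 0 < volume (Metric.ball (0 : EuclideanSpace ℝ (Fin n)) 1) :=
    Metric.measure_ball_pos volume 0 one_pos
  have hBfin : volume (Metric.ball (0 : EuclideanSpace ℝ (Fin n)) 1) ≠ ∞ :=
    measure_ball_lt_top.ne
  set B := volume (Metric.ball (0 : EuclideanSpace ℝ (Fin n)) 1) with hB
  refine ⟨2 ^ n * B.toReal, mul_pos (by positivity) (ENNReal.toReal_pos hBpos.ne' hBfin), ?_⟩
  intro D D₁ D₂ v hconv hopen hbdd hne h1D h2D hm1 hm2 hμ1 hμ2 hdiff hvL2 hgL2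
  have hInonneg : 0 ≤ ∫ x in D, ‖fderiv ℝ v x‖ ^ 2 :=
    integral_nonneg fun x => sq_nonneg _
  have hCnn : (0:ℝ) ≤ 2 ^ n * B.toReal := by positivity
  by_cases hsub : D.Subsingleton
  · -- degenerate case : D₁ = D₂
    obtain ⟨a, ha⟩ := nonempty_of_measure_ne_zero hμ1.ne'
    obtain ⟨b, hb⟩ := nonempty_of_measure_ne_zero hμ2.ne'
    have hD12 : D₁ = D₂ := by
      apply Set.Subset.antisymm
      · intro z hz
        have : z = b := hsub (h1D hz) (h2D hb)
        rw [this]; exact hb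
      · intro z hz
        have : z = a := hsub (h2D hz) (h1D ha)
        rw [this]; exact ha
    rw [hD12, sub_self, zero_pow (by norm_num)]
    exact mul_nonneg (div_nonneg (mul_nonneg hCnn (pow_nonneg Metric.diam_nonneg _))
      (mul_nonneg ENNReal.toReal_nonneg ENNReal.toReal_nonneg)) hInonneg
  -- nondegenerate case
  rw [← Set.not_nontrivial_iff, not_not] at hsub
  obtain ⟨a, ha, b, hb, hab⟩ := hsub
  have hd : 0 < Metric.diam D :=
    lt_of_lt_of_le (dist_pos.mpr hab) (Metric.dist_le_diam_of_mem hbdd ha hb)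
  set d := Metric.diam D with hddef
  have hDm : MeasurableSet D := hopen.measurableSet
  have hvolD : volume D < ∞ := hbdd.measure_lt_top
  have hV1fin : volume D₁ ≠ ∞ := (lt_of_le_of_lt (measure_mono h1D) hvolD).ne
  have hV2fin : volume D₂ ≠ ∞ := (lt_of_le_of_lt (measure_mono h2D) hvolD).ne
  set V₁ := (volume D₁).toReal with hV₁
  set V₂ := (volume D₂).toReal with hV₂
  have hV1pos : 0 < V₁ := ENNReal.toReal_pos hμ1.ne' hV1fin
  have hV2pos : 0 < V₂ := ENNReal.toReal_pos hμ2.ne' hV2fin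
  have hgm : Measurable fun z : EuclideanSpace ℝ (Fin n) =>
      ENNReal.ofReal (‖fderiv ℝ v z‖ ^ 2) :=
    ((measurable_fderiv ℝ v).norm.pow_const 2).ennreal_ofReal
  set J := ∫⁻ z in D, ENNReal.ofReal (‖fderiv ℝ v z‖ ^ 2) with hJdef
  have hg2int : IntegrableOn (fun z => ‖fderiv ℝ v z‖ ^ 2) D :=
    (memLp_two_iff_integrable_sq_norm hgL2.aestronglyMeasurable).mp hgL2
  have hJfin : J ≠ ∞ := by
    have h := hg2int.2
    simp only [HasFiniteIntegral] at h
    have e : ∀ z, ‖(‖fderiv ℝ v z‖ ^ 2)‖ₑ = ENNReal.ofReal (‖fderiv ℝ v z‖ ^ 2) :=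
      fun z => by rw [← Real.enorm_eq_ofReal (by positivity)]
    simp only [e] at h
    exact h.ne
  have hIJ : ∫ x in D, ‖fderiv ℝ v x‖ ^ 2 = J.toReal :=
    integral_eq_lintegral_of_nonneg_ae (Filter.Eventually.of_forall fun x => sq_nonneg _)
      ((measurable_fderiv ℝ v).norm.pow_const 2).aestronglyMeasurable
  -- pointwise segment bound
  have hseg : ∀ x ∈ D, ∀ y ∈ D, ENNReal.ofReal ((v x - v y) ^ 2) ≤
      ENNReal.ofReal (d ^ 2) *
        ∫⁻ t in Set.Ioc (0:ℝ) 1, ENNReal.ofReal (‖fderiv ℝ v ((1 - t) • y + t • x)‖ ^ 2) := by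
    intro x hx y hy
    have hxy : ‖x - y‖ ≤ d := by
      rw [← dist_eq_norm]; exact Metric.dist_le_diam_of_mem hbdd hx hy
    have h := seg_bound n v hdiff x y hd hxy
    have e : ∀ t : ℝ, y + t • (x - y) = (1 - t) • y + t • x := by
      intro t; rw [sub_smul, one_smul, smul_sub]; abel
    simpa only [e] using h
  -- the double lintegral L and its bound
  set L := ∫⁻ x in D₁, ∫⁻ y in D₂, ENNReal.ofReal ((v x - v y) ^ 2) with hLdef
  set T := ∫⁻ x in D₁, ∫⁻ y in D₂,
    ∫⁻ t in Set.Ioc (0:ℝ) 1, ENNReal.ofReal (‖fderiv ℝ v ((1 - t) • y + t • x)‖ ^ 2) with hTdef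
  have hLT : L ≤ ENNReal.ofReal (d ^ 2) * T := by
    have step1 : L ≤ ∫⁻ x in D₁, ENNReal.ofReal (d ^ 2) * ∫⁻ y in D₂,
        ∫⁻ t in Set.Ioc (0:ℝ) 1, ENNReal.ofReal (‖fderiv ℝ v ((1 - t) • y + t • x)‖ ^ 2) := by
      refine lintegral_mono_ae ((ae_restrict_iff' hm1).mpr
        (Filter.Eventually.of_forall fun x hx => ?_))
      calc ∫⁻ y in D₂, ENNReal.ofReal ((v x - v y) ^ 2)
          ≤ ∫⁻ y in D₂, ENNReal.ofReal (d ^ 2) * ∫⁻ t in Set.Ioc (0:ℝ) 1,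
              ENNReal.ofReal (‖fderiv ℝ v ((1 - t) • y + t • x)‖ ^ 2) :=
            lintegral_mono_ae ((ae_restrict_iff' hm2).mpr
              (Filter.Eventually.of_forall fun y hy => hseg x (h1D hx) y (h2D hy)))
        _ = ENNReal.ofReal (d ^ 2) * ∫⁻ y in D₂, ∫⁻ t in Set.Ioc (0:ℝ) 1,
              ENNReal.ofReal (‖fderiv ℝ v ((1 - t) • y + t • x)‖ ^ 2) :=
            lintegral_const_mul' _ _ ENNReal.ofReal_ne_top
    calc L ≤ _ := step1
      _ = ENNReal.ofReal (d ^ 2) * T := lintegral_const_mul' _ _ ENNReal.ofReal_ne_top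
  have hT : T ≤ 2 ^ n * volume D * J :=
    triple_bound n _ hgm hconv hDm hm1 hm2 h1D h2D
  have hvolDle : volume D ≤ ENNReal.ofReal (d ^ n) * B := by
    have hsubB : D ⊆ Metric.closedBall a d := fun z hz => by
      rw [Metric.mem_closedBall, dist_comm]
      exact Metric.dist_le_diam_of_mem hbdd ha hz
    calc volume D ≤ volume (Metric.closedBall a d) := measure_mono hsubB
      _ = ENNReal.ofReal (d ^ n) * B := by
        rw [Measure.addHaar_closedBall volume a hd.le, finrank_euclideanSpace_fin]
  set R := ENNReal.ofReal (d ^ 2) * (2 ^ n * (ENNReal.ofReal (d ^ n) * B) * J) with hRdef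
  have hLR : L ≤ R := by
    calc L ≤ ENNReal.ofReal (d ^ 2) * T := hLT
      _ ≤ ENNReal.ofReal (d ^ 2) * (2 ^ n * volume D * J) := mul_le_mul_right hT _
      _ ≤ R := by
        rw [hRdef]
        exact mul_le_mul_right (mul_le_mul_left (mul_le_mul_right hvolDle _) _) _
  have hRfin : R ≠ ∞ := by
    apply ENNReal.mul_ne_top ENNReal.ofReal_ne_top
    apply ENNReal.mul_ne_top
    · exact ENNReal.mul_ne_top (ENNReal.pow_ne_top ENNReal.ofNat_ne_top)
        (ENNReal.mul_ne_top ENNReal.ofReal_ne_top hBfin)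
    · exact hJfin
  have hRt : R.toReal = d ^ 2 * (2 ^ n * (d ^ n * B.toReal) * J.toReal) := by
    rw [hRdef, ENNReal.toReal_mul, ENNReal.toReal_mul, ENNReal.toReal_mul, ENNReal.toReal_mul,
      ENNReal.toReal_pow, ENNReal.toReal_ofReal (by positivity),
      ENNReal.toReal_ofReal (by positivity), ENNReal.toReal_ofNat]
  -- finite measure instances
  haveI hfin1 : IsFiniteMeasure (volume.restrict D₁) :=
    ⟨by rw [Measure.restrict_apply_univ]; exact lt_of_le_of_lt (measure_mono h1D) hvolD⟩
  haveI hfin2 : IsFiniteMeasure (volume.restrict D₂) :=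
    ⟨by rw [Measure.restrict_apply_univ]; exact lt_of_le_of_lt (measure_mono h2D) hvolD⟩
  have hvC : Continuous v := hdiff.continuous
  have hv2 : MemLp v 2 (volume.restrict D₂) :=
    hvL2.mono_measure (Measure.restrict_mono h2D le_rfl)
  have hv1 : MemLp v 2 (volume.restrict D₁) :=
    hvL2.mono_measure (Measure.restrict_mono h1D le_rfl)
  set m₂ := ⨍ y in D₂, v y with hm₂def
  have hIntv2 : ∫ y in D₂, v y = V₂ * m₂ := by
    rw [hm₂def, setAverage_eq, measureReal_def, smul_eq_mul, ← hV₂]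
    field_simp
  -- per-x Jensen
  have hpt : ∀ x, ENNReal.ofReal ((v x - m₂) ^ 2) ≤
      (volume D₂)⁻¹ * ∫⁻ y in D₂, ENNReal.ofReal ((v x - v y) ^ 2) := by
    intro x
    have hmem : MemLp (fun y => v x - v y) 2 (volume.restrict D₂) :=
      (memLp_const (v x)).sub hv2
    have hvar := var_le hmem
    rw [Measure.restrict_apply_univ] at hvar
    have hint : ∫ y in D₂, (v x - v y) = V₂ * (v x - m₂) := by
      rw [integral_sub (integrable_const _) (hv2.integrable one_le_two), integral_const,
        measureReal_def, Measure.restrict_apply_univ, hIntv2, ← hV₂, smul_eq_mul]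
      ring
    set Φ := ∫⁻ y in D₂, ENNReal.ofReal ((v x - v y) ^ 2) with hΦdef
    have hsqint : Integrable (fun y => (v x - v y) ^ 2) (volume.restrict D₂) :=
      hmem.integrable_sq
    have hΦfin : Φ ≠ ∞ := by
      have h := hsqint.2
      simp only [HasFiniteIntegral] at h
      have e : ∀ y, ‖(v x - v y) ^ 2‖ₑ = ENNReal.ofReal ((v x - v y) ^ 2) :=
        fun y => by rw [← Real.enorm_eq_ofReal (sq_nonneg _)]
      simp only [e] at h
      exact h.ne
    have hΦeq : ∫ y in D₂, (v x - v y) ^ 2 = Φ.toReal :=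
      integral_eq_lintegral_of_nonneg_ae (Filter.Eventually.of_forall fun y => sq_nonneg _)
        (((continuous_const.sub hvC).pow 2).aestronglyMeasurable)
    rw [hint, hΦeq] at hvar
    have hre : (v x - m₂) ^ 2 ≤ V₂⁻¹ * Φ.toReal := by
      rw [inv_mul_eq_div, le_div_iff₀ hV2pos]
      nlinarith [hvar, hV2pos]
    calc ENNReal.ofReal ((v x - m₂) ^ 2) ≤ ENNReal.ofReal (V₂⁻¹ * Φ.toReal) :=
          ENNReal.ofReal_le_ofReal hre
      _ = ENNReal.ofReal V₂⁻¹ * ENNReal.ofReal Φ.toReal :=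
          ENNReal.ofReal_mul (by positivity)
      _ = (volume D₂)⁻¹ * Φ := by
          rw [ENNReal.ofReal_toReal hΦfin, hV₂, ENNReal.ofReal_inv_of_pos
            (ENNReal.toReal_pos hμ2.ne' hV2fin), ENNReal.ofReal_toReal hV2fin]
  have hP : ∫⁻ x in D₁, ENNReal.ofReal ((v x - m₂) ^ 2) ≤ (volume D₂)⁻¹ * L := by
    calc ∫⁻ x in D₁, ENNReal.ofReal ((v x - m₂) ^ 2)
        ≤ ∫⁻ x in D₁, (volume D₂)⁻¹ * ∫⁻ y in D₂, ENNReal.ofReal ((v x - v y) ^ 2) :=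
          lintegral_mono hpt
      _ = (volume D₂)⁻¹ * L := lintegral_const_mul' _ _ (ENNReal.inv_ne_top.mpr hμ2.ne')
  -- outer Jensen
  have hmem1 : MemLp (fun x => v x - m₂) 2 (volume.restrict D₁) := hv1.sub (memLp_const m₂)
  have hvar1 := var_le hmem1
  rw [Measure.restrict_apply_univ] at hvar1
  have hIntv1 : ∫ x in D₁, v x = V₁ * ⨍ x in D₁, v x := by
    rw [setAverage_eq, measureReal_def, smul_eq_mul, ← hV₁]
    field_simp
  have hint1 : ∫ x in D₁, (v x - m₂) = V₁ * ((⨍ x in D₁, v x) - m₂) := by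
    rw [integral_sub (hv1.integrable one_le_two) (integrable_const _), integral_const,
      measureReal_def, Measure.restrict_apply_univ, hIntv1, ← hV₁, smul_eq_mul]
    ring
  set P := ∫⁻ x in D₁, ENNReal.ofReal ((v x - m₂) ^ 2) with hPdef
  have hsqeq1 : ∫ x in D₁, (v x - m₂) ^ 2 = P.toReal :=
    integral_eq_lintegral_of_nonneg_ae (Filter.Eventually.of_forall fun x => sq_nonneg _)
      (((hvC.sub continuous_const).pow 2).aestronglyMeasurable)
  rw [hint1, hsqeq1, ← hV₁] at hvar1
  -- combine everything
  have hPle : P ≤ (volume D₂)⁻¹ * R := le_trans hP (mul_le_mul_right hLR _)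
  have hD2Rfin : (volume D₂)⁻¹ * R ≠ ∞ :=
    ENNReal.mul_ne_top (ENNReal.inv_ne_top.mpr hμ2.ne') hRfin
  have hPt : P.toReal ≤ V₂⁻¹ * R.toReal := by
    calc P.toReal ≤ ((volume D₂)⁻¹ * R).toReal := ENNReal.toReal_mono hD2Rfin hPle
      _ = V₂⁻¹ * R.toReal := by rw [ENNReal.toReal_mul, ENNReal.toReal_inv, ← hV₂]
  have hPtnn : 0 ≤ P.toReal := ENNReal.toReal_nonneg
  set Δ := (⨍ x in D₁, v x) - m₂ with hΔdef
  have hkey : V₁ * V₂ * Δ ^ 2 ≤ R.toReal := by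
    have h1 : V₁ * Δ ^ 2 ≤ P.toReal := by nlinarith [hvar1, hV1pos]
    have h2 : V₂ * V₂⁻¹ = 1 := mul_inv_cancel₀ hV2pos.ne'
    have h3 : V₂ * P.toReal ≤ R.toReal := by
      calc V₂ * P.toReal ≤ V₂ * (V₂⁻¹ * R.toReal) :=
            mul_le_mul_of_nonneg_left hPt hV2pos.le
        _ = (V₂ * V₂⁻¹) * R.toReal := by ring
        _ = R.toReal := by rw [h2, one_mul]
    have h4 : V₂ * (V₁ * Δ ^ 2) ≤ V₂ * P.toReal := mul_le_mul_of_nonneg_left h1 hV2pos.le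
    nlinarith [h3, h4]
  rw [hIJ]
  have hRHS : 2 ^ n * B.toReal * d ^ (n + 2) / (V₁ * V₂) * J.toReal = R.toReal / (V₁ * V₂) := by
    rw [hRt, pow_add]
    field_simp
  rw [hRHS, le_div_iff₀ (by positivity)]
  calc Δ ^ 2 * (V₁ * V₂) = V₁ * V₂ * Δ ^ 2 := by ring
    _ ≤ R.toReal := hkey
end
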